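/- If J* ≥ 0, then a stationary policy μ is optimal (i.e., J_μ = J*) if and only if J* = T_μ(J*). -/

import Mathlib

/-!
Common framework: countable-state/countable-control total-cost MDPs under the
General Convergence (GC) condition, following H. Yu, "On Convergence of Value
Iteration for a Class of Total Cost Markov Decision Processes".

States `S` and controls `C` are countable types; `U x` is the nonempty set of
feasible controls at `x`; `g x u ∈ (-∞, +∞]` is the one-stage cost (an `EReal`
that is never `⊥` on feasible pairs); `q x u x'` are transition probabilities.

A policy is represented by its conditional control distributions given the
(reversed) history of past (state, control) pairs and the current state.
Expectations are computed by explicit countable sums, splitting every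
extended-real quantity into its positive and negative parts (computed in
`ℝ≥0∞`) and recombining with the convention `∞ - ∞ = ∞`.
-/

open scoped ENNReal Classical
open Filter

noncomputable section

namespace GCMDP

/-- The positive part of an extended real, as an element of `ℝ≥0∞`. -/
def ePos (a : EReal) : ℝ≥0∞ := if a = ⊤ then ⊤ else ENNReal.ofReal a.toReal

/-- Recombine a positive part `P` and a negative part `N` into an extended real,
with the convention `∞ - ∞ = ∞`. -/
def signedSum (P N : ℝ≥0∞) : EReal := if P = ⊤ then ⊤ else (P : EReal) - (N : EReal)

variable {S C : Type}

/-- A (randomized, history-dependent) policy: to each reversed list of past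
(state, control) pairs and each current state it assigns a mass function on
controls. -/
def Policy (S C : Type) : Type := List (S × C) → S → C → ℝ≥0∞

/-- A policy is valid for the control constraint `U` if each of its conditional
distributions is a probability distribution concentrated on the feasible set. -/
def IsPolicy (U : S → Set C) (π : Policy S C) : Prop :=
  ∀ (h : List (S × C)) (x : S), (∑' u : C, π h x u) = 1 ∧ ∀ u : C, π h x u ≠ 0 → u ∈ U x

/-- A policy is nonrandomized if each of its conditional distributions is a
point mass. -/
def Nonrandomized (π : Policy S C) : Prop :=
  ∀ (h : List (S × C)) (x : S), ∃ u : C, ∀ u' : C, π h x u' = if u' = u then 1 else 0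

/-- The initial state recorded in a reversed history `h` with current state `x`. -/
def initOf (h : List (S × C)) (x : S) : S := ((h.getLast?).map Prod.fst).getD x

/-- A policy is semi-Markov if its decision at time `k` depends on the history
only through the time `k`, the initial state and the current state. -/
def IsSemiMarkov (π : Policy S C) : Prop :=
  ∀ (h h' : List (S × C)) (x : S), h.length = h'.length → initOf h x = initOf h' x →
    π h x = π h' x

/-- A policy is Markov if its decision at time `k` depends on the history only
through the time `k` and the current state. -/
def IsMarkov (π : Policy S C) : Prop :=
  ∀ (h h' : List (S × C)) (x : S), h.length = h'.length → π h x = π h' x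

/-- A policy is stationary if its decision depends only on the current state. -/
def IsStationary (π : Policy S C) : Prop :=
  ∀ (h h' : List (S × C)) (x : S), π h x = π h' x

/-- The stationary policy determined by a one-step decision rule `μ`. -/
def toPolicy (μ : S → C → ℝ≥0∞) : Policy S C := fun _ x u => μ x u

/-- Probability that, starting from `x₀` and following policy `π`, the first
transitions produce the reversed history `h` and current state `y`. -/
def histProb (q : S → C → S → ℝ≥0∞) (π : Policy S C) (x₀ : S) :
    List (S × C) → S → ℝ≥0∞
  | [], y => if y = x₀ then 1 else 0
  | (z, u) :: h, y => histProb q π x₀ h z * π h z u * q z u y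

/-- Marginal distribution of the state `x_n` at time `n` under policy `π`
started at `x₀`. -/
def sDist (q : S → C → S → ℝ≥0∞) (π : Policy S C) (x₀ : S) (n : ℕ) (y : S) : ℝ≥0∞ :=
  ∑' h : {l : List (S × C) // l.length = n}, histProb q π x₀ h.1 y

/-- Joint distribution of the state-control pair `(x_n, u_n)` at time `n`. -/
def saDist (q : S → C → S → ℝ≥0∞) (π : Policy S C) (x₀ : S) (n : ℕ) (y : S) (u : C) : ℝ≥0∞ :=
  ∑' h : {l : List (S × C) // l.length = n}, histProb q π x₀ h.1 y * π h.1 y u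

/-- Expectation `E^π_{x₀}[f(x_n, u_n)]` of a nonnegative cost. -/
def costAt (q : S → C → S → ℝ≥0∞) (π : Policy S C) (x₀ : S) (n : ℕ)
    (f : S → C → ℝ≥0∞) : ℝ≥0∞ :=
  ∑' y : S, ∑' u : C, saDist q π x₀ n y u * f y u

/-- Positive part `g₊` of the one-stage cost. -/
def gPos (g : S → C → EReal) (x : S) (u : C) : ℝ≥0∞ := ePos (g x u)

/-- Negative part `g₋` of the one-stage cost. -/
def gNeg (g : S → C → EReal) (x : S) (u : C) : ℝ≥0∞ := ePos (-(g x u))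

/-- `J_π^+(x) = E^π_x[∑_k g₊(x_k,u_k)]`. -/
def Jplus (q : S → C → S → ℝ≥0∞) (g : S → C → EReal) (π : Policy S C) (x : S) : ℝ≥0∞ :=
  ∑' n : ℕ, costAt q π x n (gPos g)

/-- `J_π^-(x) = E^π_x[∑_k g₋(x_k,u_k)]`. -/
def Jminus (q : S → C → S → ℝ≥0∞) (g : S → C → EReal) (π : Policy S C) (x : S) : ℝ≥0∞ :=
  ∑' n : ℕ, costAt q π x n (gNeg g)

/-- The total cost `J_π(x) = J_π^+(x) - J_π^-(x)` of a policy. -/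
def Jpol (q : S → C → S → ℝ≥0∞) (g : S → C → EReal) (π : Policy S C) (x : S) : EReal :=
  signedSum (Jplus q g π x) (Jminus q g π x)

/-- The general convergence (GC) condition: `sup_π J_π^-(x) < ∞` for all `x`. -/
def GC (U : S → Set C) (q : S → C → S → ℝ≥0∞) (g : S → C → EReal) : Prop :=
  ∀ x : S, (⨆ π ∈ {π' : Policy S C | IsPolicy U π'}, Jminus q g π x) ≠ ⊤

/-- The optimal cost function `J*(x) = inf_π J_π(x)`. -/
def Jstar (U : S → Set C) (q : S → C → S → ℝ≥0∞) (g : S → C → EReal) (x : S) : EReal :=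
  ⨅ π ∈ {π' : Policy S C | IsPolicy U π'}, Jpol q g π x

/-- `J^{*+}(x) = inf_π J_π^+(x)`. -/
def JstarPlus (U : S → Set C) (q : S → C → S → ℝ≥0∞) (g : S → C → EReal) (x : S) : ℝ≥0∞ :=
  ⨅ π ∈ {π' : Policy S C | IsPolicy U π'}, Jplus q g π x

/-- `J^{*-}(x) = inf_π J_π^-(x)`. -/
def JstarMinus (U : S → Set C) (q : S → C → S → ℝ≥0∞) (g : S → C → EReal) (x : S) : ℝ≥0∞ :=
  ⨅ π ∈ {π' : Policy S C | IsPolicy U π'}, Jminus q g π x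

/-- The general one-stage dynamic programming operator with one-stage cost `c`:
`(opT c J)(x) = inf_{u ∈ U(x)} { c(x,u) + ∑_{x'} J(x') q(x'|x,u) }`, where the
bracket is evaluated by separating positive and negative parts, with the
convention `∞ - ∞ = ∞`. -/
def opT (U : S → Set C) (q : S → C → S → ℝ≥0∞) (c : S → C → EReal)
    (J : S → EReal) (x : S) : EReal :=
  ⨅ u ∈ U x,
    signedSum (ePos (c x u) + ∑' x' : S, q x u x' * ePos (J x'))
      (ePos (-(c x u)) + ∑' x' : S, q x u x' * ePos (-(J x')))

/-- The dynamic programming operator `T` of the total cost problem. -/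
def Top (U : S → Set C) (q : S → C → S → ℝ≥0∞) (g : S → C → EReal) :
    (S → EReal) → S → EReal :=
  opT U q g

/-- The operator `T₊` associated with the positive part `g₊` of the cost. -/
def TopPlus (U : S → Set C) (q : S → C → S → ℝ≥0∞) (g : S → C → EReal) :
    (S → EReal) → S → EReal :=
  opT U q (fun x u => max (g x u) 0)

/-- The operator `T₋` associated with the (negated) negative part `-g₋` of the cost. -/
def TopMinus (U : S → Set C) (q : S → C → S → ℝ≥0∞) (g : S → C → EReal) :
    (S → EReal) → S → EReal :=
  opT U q (fun x u => min (g x u) 0)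

/-- The cost-free operator `T₀`. -/
def TopZero (U : S → Set C) (q : S → C → S → ℝ≥0∞) :
    (S → EReal) → S → EReal :=
  opT U q (fun _ _ => 0)

/-- The monotone-increasing modification `T̃(J) = max{J, T(J)}` of `T`. -/
def Ttil (U : S → Set C) (q : S → C → S → ℝ≥0∞) (g : S → C → EReal)
    (J : S → EReal) (x : S) : EReal :=
  max (J x) (Top U q g J x)

/-- The operator `T_μ` associated with a stationary decision rule `μ`. -/
def Tmu (q : S → C → S → ℝ≥0∞) (g : S → C → EReal) (μ : S → C → ℝ≥0∞)
    (J : S → EReal) (x : S) : EReal :=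
  signedSum (∑' u : C, μ x u * (ePos (g x u) + ∑' x' : S, q x u x' * ePos (J x')))
    (∑' u : C, μ x u * (ePos (-(g x u)) + ∑' x' : S, q x u x' * ePos (-(J x'))))

/-- Expectation `E^π_{x₀}[J(x_n)]` of an extended-real function of the state at
time `n` (positive and negative parts combined with the convention `∞-∞=∞`). -/
def expState (q : S → C → S → ℝ≥0∞) (π : Policy S C) (x₀ : S) (n : ℕ)
    (J : S → EReal) : EReal :=
  signedSum (∑' y : S, sDist q π x₀ n y * ePos (J y))
    (∑' y : S, sDist q π x₀ n y * ePos (-(J y)))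

/-- The expected tail cost `E^π_{x₀}[∑_{k ≥ n} g(x_k, u_k)]`. -/
def tailCost (q : S → C → S → ℝ≥0∞) (g : S → C → EReal) (π : Policy S C)
    (x₀ : S) (n : ℕ) : EReal :=
  signedSum (∑' k : ℕ, costAt q π x₀ (n + k) (gPos g))
    (∑' k : ℕ, costAt q π x₀ (n + k) (gNeg g))

/-- Membership in the class `A₀(S)`: functions nowhere `-∞` such that
`inf_{n ≥ 1} T₀ⁿ(min{J, 0})` is nowhere `-∞`. -/
def MemA0 (U : S → Set C) (q : S → C → S → ℝ≥0∞) (J : S → EReal) : Prop :=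
  (∀ x : S, J x ≠ ⊥) ∧
    ∀ x : S, (⨅ n : ℕ, (TopZero U q)^[n + 1] (fun y => min (J y) 0) x) ≠ ⊥


-- EReal / signedSum helper lemmas
section ERealAux

lemma coe_ennreal_fin {P : ℝ≥0∞} (hP : P ≠ ⊤) : (P : EReal) = ((P.toReal : ℝ) : EReal) := by
  rw [← EReal.toReal_coe_ennreal (x := P)]
  exact (EReal.coe_toReal (by simpa [EReal.coe_ennreal_eq_top_iff] using hP) (by simp)).symm

lemma ePos_coe_real (r : ℝ) : ePos ((r : ℝ) : EReal) = ENNReal.ofReal r := by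
  rw [ePos, if_neg (by simp), EReal.toReal_coe]

lemma ePos_coe (P : ℝ≥0∞) : ePos (P : EReal) = P := by
  by_cases hP : P = ⊤
  · simp [ePos, hP]
  · rw [coe_ennreal_fin hP, ePos_coe_real, ENNReal.ofReal_toReal hP]

lemma ePos_bot : ePos (⊥ : EReal) = 0 := by
  simp [ePos]

lemma ePos_of_nonpos {a : EReal} (h : a ≤ 0) : ePos a = 0 := by
  have ha : a ≠ ⊤ := by
    intro hh; rw [hh] at h; exact absurd h (by simp)
  rw [ePos, if_neg ha]
  rcases eq_or_ne a ⊥ with h' | h'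
  · simp [h']
  · have : a.toReal ≤ 0 := by
      have := EReal.toReal_le_toReal h h' (by simp)
      simpa using this
    simp [ENNReal.ofReal_eq_zero.2 this]

lemma ePos_neg_of_nonneg {a : EReal} (h : 0 ≤ a) : ePos (-a) = 0 :=
  ePos_of_nonpos (by simpa using EReal.neg_le_neg_iff.2 h)

lemma coe_ePos_of_nonneg {a : EReal} (h : 0 ≤ a) : (ePos a : EReal) = a := by
  rcases eq_or_ne a ⊤ with rfl | ha
  · simp [ePos]
  · have hb : a ≠ ⊥ := ne_of_gt (lt_of_lt_of_le (by simp) h)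
    rw [ePos, if_neg ha]
    have h0 : (0:ℝ) ≤ a.toReal := by
      have := EReal.toReal_le_toReal h (by simp) ha
      simpa using this
    rw [coe_ennreal_fin (by simp [ENNReal.ofReal_ne_top]), ENNReal.toReal_ofReal h0,
      EReal.coe_toReal ha hb]

lemma signedSum_top {N : ℝ≥0∞} : signedSum ⊤ N = ⊤ := by simp [signedSum]

lemma signedSum_fin {P N : ℝ≥0∞} (hP : P ≠ ⊤) (hN : N ≠ ⊤) :
    signedSum P N = ((P.toReal - N.toReal : ℝ) : EReal) := by
  rw [signedSum, if_neg hP, coe_ennreal_fin hP, coe_ennreal_fin hN, ← EReal.coe_sub]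

lemma ePos_signedSum {P N : ℝ≥0∞} (hN : N ≠ ⊤) : ePos (signedSum P N) = P - N := by
  rcases eq_or_ne P ⊤ with rfl | hP
  · rw [signedSum_top]; simp [ePos, ENNReal.top_sub hN]
  · rw [signedSum_fin hP hN, ePos_coe_real,
      ENNReal.ofReal_sub _ ENNReal.toReal_nonneg, ENNReal.ofReal_toReal hP,
      ENNReal.ofReal_toReal hN]

lemma ePos_neg_signedSum {P N : ℝ≥0∞} (hN : N ≠ ⊤) : ePos (-(signedSum P N)) = N - P := by
  rcases eq_or_ne P ⊤ with rfl | hP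
  · rw [signedSum_top]; simp [ePos_bot, (tsub_eq_zero_of_le le_top : N - ⊤ = 0)]
  · rw [signedSum_fin hP hN, ← EReal.coe_neg, ePos_coe_real, neg_sub,
      ENNReal.ofReal_sub _ ENNReal.toReal_nonneg, ENNReal.ofReal_toReal hP,
      ENNReal.ofReal_toReal hN]

lemma signedSum_add_cancel {P N D : ℝ≥0∞} (hD : D ≠ ⊤) :
    signedSum (P + D) (N + D) = signedSum P N := by
  rcases eq_or_ne P ⊤ with rfl | hP
  · simp [signedSum]
  rcases eq_or_ne N ⊤ with rfl | hN
  · rw [signedSum, if_neg (by simp [hP, hD]), signedSum, if_neg hP]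
    simp [EReal.sub_top]
  · rw [signedSum_fin (by simp [hP, hD]) (by simp [hN, hD]), signedSum_fin hP hN,
      ENNReal.toReal_add hP hD, ENNReal.toReal_add hN hD]
    ring_nf

lemma le_of_signedSum_nonneg {P N : ℝ≥0∞} (h : 0 ≤ signedSum P N) :
    P ≤ ePos (signedSum P N) + N := by
  rcases eq_or_ne P ⊤ with rfl | hP
  · rw [signedSum_top]; simp [ePos]
  rcases eq_or_ne N ⊤ with rfl | hN
  · rw [signedSum, if_neg hP] at h
    simp [EReal.sub_top] at h
  · rw [ePos_signedSum hN]
    exact le_tsub_add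

lemma signedSum_le_coe {P N K : ℝ≥0∞} (hN : N ≠ ⊤) (h : P ≤ K + N) :
    signedSum P N ≤ (K : EReal) := by
  rcases eq_or_ne K ⊤ with rfl | hK
  · simp
  · have hP : P ≠ ⊤ := by
      intro hh; rw [hh] at h
      exact absurd (top_le_iff.1 h) (by simp [hK, hN])
    rw [signedSum_fin hP hN, coe_ennreal_fin hK, EReal.coe_le_coe_iff]
    have := ENNReal.toReal_mono (by simp [hK, hN]) h
    rw [ENNReal.toReal_add hK hN] at this
    linarith

end ERealAux
section ListAux

/-- Lists of length `n+1` viewed as a head element and a tail of length `n`. -/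
def consEquiv (A : Type) (n : ℕ) :
    A × {l : List A // l.length = n} ≃ {l : List A // l.length = n + 1} where
  toFun p := ⟨p.1 :: p.2.1, by simp [p.2.2]⟩
  invFun l :=
    match l with
    | ⟨[], h⟩ => absurd h (by simp)
    | ⟨a :: t, h⟩ => (a, ⟨t, by simpa using h⟩)
  left_inv := by rintro ⟨a, ⟨t, ht⟩⟩; rfl
  right_inv := by
    rintro ⟨l, hl⟩
    cases l with
    | nil => simp at hl
    | cons a t => rfl

/-- Lists of length `n+1` viewed as an initial segment of length `n` plus a last element. -/
def concatEquiv (A : Type) (n : ℕ) :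
    {l : List A // l.length = n} × A ≃ {l : List A // l.length = n + 1} where
  toFun p := ⟨p.1.1 ++ [p.2], by simp [p.1.2]⟩
  invFun l :=
    (⟨l.1.dropLast, by simp [l.2]⟩,
      l.1.getLast (by
        intro hnil
        have := l.2
        rw [hnil] at this
        simp at this))
  left_inv := by
    rintro ⟨⟨t, ht⟩, a⟩
    simp only [Prod.mk.injEq, Subtype.mk.injEq]
    constructor
    · exact List.dropLast_concat
    · exact List.getLast_concat
  right_inv := by
    rintro ⟨l, hl⟩
    simp only [Subtype.mk.injEq]
    exact List.dropLast_append_getLast _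

end ListAux

section HistAux

variable {S C : Type} (q : S → C → S → ℝ≥0∞) (μ : S → C → ℝ≥0∞)

lemma initOf_cons (a : S) (b : C) (t : List (S × C)) (y : S) :
    initOf ((a, b) :: t) y = initOf t a := by
  cases t with
  | nil => simp [initOf]
  | cons c t' =>
      simp only [initOf, List.getLast?_cons_cons]
      rw [List.getLast?_eq_getLast (l := c :: t') (by simp)]
      simp

lemma histProb_nil (x y : S) :
    histProb q (toPolicy μ) x [] y = if y = x then 1 else 0 := rfl

lemma histProb_cons (x y a : S) (b : C) (t : List (S × C)) :
    histProb q (toPolicy μ) x ((a, b) :: t) y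
      = histProb q (toPolicy μ) x t a * μ a b * q a b y := rfl

lemma histProb_start (h : List (S × C)) (x₁ y : S) :
    histProb q (toPolicy μ) x₁ h y
      = (if initOf h y = x₁ then 1 else 0)
        * histProb q (toPolicy μ) (initOf h y) h y := by
  induction h generalizing y with
  | nil =>
      simp only [histProb_nil, initOf, List.getLast?]
      simp
      split_ifs with hy <;> simp [hy]
  | cons p t ih =>
      obtain ⟨a, b⟩ := p
      rw [histProb_cons, initOf_cons, ih a, histProb_cons]
      by_cases hh : initOf t a = x₁
      · simp [hh, mul_assoc]
      · simp [hh]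

lemma histProb_concat (h : List (S × C)) (z w y : S) (u : C) :
    histProb q (toPolicy μ) w (h ++ [(z, u)]) y
      = ((if z = w then 1 else 0) * μ z u)
        * (q z u (initOf h y) * histProb q (toPolicy μ) (initOf h y) h y) := by
  induction h generalizing y with
  | nil =>
      simp only [List.nil_append, histProb_cons, histProb_nil, initOf, List.getLast?]
      simp
  | cons p t ih =>
      obtain ⟨a, b⟩ := p
      rw [List.cons_append, histProb_cons, ih a, initOf_cons, histProb_cons]
      ring_nf

lemma tsum_q_histProb (h : List (S × C)) (y z : S) (u : C) :
    (∑' x₁ : S, q z u x₁ * histProb q (toPolicy μ) x₁ h y)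
      = q z u (initOf h y) * histProb q (toPolicy μ) (initOf h y) h y := by
  have : ∀ x₁ : S, q z u x₁ * histProb q (toPolicy μ) x₁ h y
      = if x₁ = initOf h y
        then q z u (initOf h y) * histProb q (toPolicy μ) (initOf h y) h y else 0 := by
    intro x₁
    rw [histProb_start q μ h x₁ y]
    by_cases hx : initOf h y = x₁
    · simp [hx, if_pos hx.symm]
    · simp [hx, if_neg (Ne.symm hx)]
  rw [tsum_congr this, tsum_ite_eq]

end HistAux
section DistAux

variable {S C : Type} (q : S → C → S → ℝ≥0∞) (μ : S → C → ℝ≥0∞)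

lemma sDist_zero (x y : S) :
    sDist q (toPolicy μ) x 0 y = if y = x then 1 else 0 := by
  rw [sDist, tsum_eq_single (⟨[], rfl⟩ : {l : List (S × C) // l.length = 0})]
  · rfl
  · rintro ⟨l, hl⟩ hne
    exact absurd (Subtype.ext (List.length_eq_zero_iff.mp hl)) hne

lemma saDist_eq (x y : S) (n : ℕ) (u : C) :
    saDist q (toPolicy μ) x n y u = sDist q (toPolicy μ) x n y * μ y u := by
  rw [saDist, sDist, ← ENNReal.tsum_mul_right]
  rfl

lemma costAt_eq (x : S) (n : ℕ) (f : S → C → ℝ≥0∞) :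
    costAt q (toPolicy μ) x n f
      = ∑' y : S, sDist q (toPolicy μ) x n y * ∑' u : C, μ y u * f y u := by
  rw [costAt]
  refine tsum_congr fun y => ?_
  rw [← ENNReal.tsum_mul_left]
  refine tsum_congr fun u => ?_
  rw [saDist_eq, mul_assoc]

lemma tsum_ite_collapse {x : S} (G : S → ℝ≥0∞) :
    (∑' y : S, (if y = x then (1 : ℝ≥0∞) else 0) * G y) = G x := by
  have h : ∀ y : S, (if y = x then (1 : ℝ≥0∞) else 0) * G y
      = if y = x then G x else 0 := by
    intro y
    by_cases hy : y = x <;> simp [hy]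
  rw [tsum_congr h, tsum_ite_eq]

lemma costAt_zero (x : S) (f : S → C → ℝ≥0∞) :
    costAt q (toPolicy μ) x 0 f = ∑' u : C, μ x u * f x u := by
  rw [costAt_eq]
  have h : ∀ y : S, sDist q (toPolicy μ) x 0 y * (∑' u : C, μ y u * f y u)
      = (if y = x then (1:ℝ≥0∞) else 0) * (fun z => ∑' u : C, μ z u * f z u) y := by
    intro y; rw [sDist_zero]
  rw [tsum_congr h, tsum_ite_collapse]

/-- Forward Chapman–Kolmogorov recursion for the state distribution. -/
lemma sDist_succ (x y' : S) (n : ℕ) :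
    sDist q (toPolicy μ) x (n + 1) y'
      = ∑' z : S, ∑' u : C, sDist q (toPolicy μ) x n z * (μ z u * q z u y') := by
  rw [sDist, ← Equiv.tsum_eq (consEquiv (S × C) n), ENNReal.tsum_prod',
    ENNReal.tsum_prod']
  refine tsum_congr fun z => tsum_congr fun u => ?_
  have h : ∀ h : {l : List (S × C) // l.length = n},
      histProb q (toPolicy μ) x (((consEquiv (S × C) n) ((z, u), h)).1) y'
        = histProb q (toPolicy μ) x h.1 z * (μ z u * q z u y') := by
    intro h
    rw [← mul_assoc]
    rfl
  rw [tsum_congr h, ENNReal.tsum_mul_right, sDist]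

/-- Backward (first-transition) recursion for the state distribution. -/
lemma sDist_succ' (w y : S) (n : ℕ) :
    sDist q (toPolicy μ) w (n + 1) y
      = ∑' u : C, μ w u * ∑' x₁ : S, q w u x₁ * sDist q (toPolicy μ) x₁ n y := by
  rw [sDist, ← Equiv.tsum_eq (concatEquiv (S × C) n)]
  have ecoe : ∀ p : {l : List (S × C) // l.length = n} × (S × C),
      ((concatEquiv (S × C) n) p : List (S × C)) = p.1.1 ++ [p.2] := fun _ => rfl
  simp only [ecoe]
  rw [ENNReal.tsum_prod']
  have h1 : ∀ h : {l : List (S × C) // l.length = n},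
      (∑' p : S × C, histProb q (toPolicy μ) w (h.1 ++ [p]) y)
        = ∑' u : C, μ w u * (q w u (initOf h.1 y)
            * histProb q (toPolicy μ) (initOf h.1 y) h.1 y) := by
    intro h
    rw [ENNReal.tsum_prod']
    have h2 : ∀ z : S, (∑' u : C, histProb q (toPolicy μ) w (h.1 ++ [(z, u)]) y)
        = (if z = w then (1:ℝ≥0∞) else 0)
          * (fun z' => ∑' u : C, μ z' u * (q z' u (initOf h.1 y)
              * histProb q (toPolicy μ) (initOf h.1 y) h.1 y)) z := by
      intro z
      simp only []
      rw [← ENNReal.tsum_mul_left]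
      refine tsum_congr fun u => ?_
      rw [histProb_concat]
      ring
    rw [tsum_congr h2, tsum_ite_collapse]
  have h1' : ∀ h : {l : List (S × C) // l.length = n},
      (∑' p : S × C, histProb q (toPolicy μ) w (h.1 ++ [p]) y)
        = ∑' u : C, μ w u * (q w u (initOf h.1 y)
            * histProb q (toPolicy μ) (initOf h.1 y) h.1 y) := h1
  rw [tsum_congr h1', ENNReal.tsum_comm]
  refine tsum_congr fun u => ?_
  rw [ENNReal.tsum_mul_left]
  congr 1
  -- ∑' h, q w u (initOf h.1 y) * histProb (initOf h.1 y) h.1 y = ∑' x₁, q w u x₁ * sDist x₁ n y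
  have h3 : ∀ x₁ : S, q w u x₁ * sDist q (toPolicy μ) x₁ n y
      = ∑' h : {l : List (S × C) // l.length = n},
          q w u x₁ * histProb q (toPolicy μ) x₁ h.1 y := by
    intro x₁
    rw [sDist, ENNReal.tsum_mul_left]
  rw [tsum_congr h3, ENNReal.tsum_comm]
  exact tsum_congr fun h => (tsum_q_histProb q μ h.1 y w u).symm

/-- Backward (first-transition) recursion for expected one-stage costs. -/
lemma costAt_succ (w : S) (n : ℕ) (f : S → C → ℝ≥0∞) :
    costAt q (toPolicy μ) w (n + 1) f
      = ∑' u : C, μ w u * ∑' x₁ : S, q w u x₁ * costAt q (toPolicy μ) x₁ n f := by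
  rw [costAt_eq]
  have h0 : ∀ y : S, sDist q (toPolicy μ) w (n + 1) y * (∑' u : C, μ y u * f y u)
      = ∑' u : C, μ w u * ((∑' x₁ : S, q w u x₁ * sDist q (toPolicy μ) x₁ n y)
          * (∑' v : C, μ y v * f y v)) := by
    intro y
    rw [sDist_succ', ← ENNReal.tsum_mul_right]
    exact tsum_congr fun u => by rw [mul_assoc]
  rw [tsum_congr h0, ENNReal.tsum_comm]
  refine tsum_congr fun u => ?_
  rw [ENNReal.tsum_mul_left]
  congr 1
  have h4 : ∀ y : S, (∑' x₁ : S, q w u x₁ * sDist q (toPolicy μ) x₁ n y)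
        * (∑' v : C, μ y v * f y v)
      = ∑' x₁ : S, q w u x₁ * (sDist q (toPolicy μ) x₁ n y * ∑' v : C, μ y v * f y v) := by
    intro y
    rw [← ENNReal.tsum_mul_right]
    exact tsum_congr fun x₁ => by rw [mul_assoc]
  rw [tsum_congr h4, ENNReal.tsum_comm]
  refine tsum_congr fun x₁ => ?_
  rw [ENNReal.tsum_mul_left, costAt_eq]

end DistAux
section RecAux

variable {S C : Type} (q : S → C → S → ℝ≥0∞) (μ : S → C → ℝ≥0∞)

lemma ennreal_tsum_nat_peel (f : ℕ → ℝ≥0∞) : ∑' n : ℕ, f n = f 0 + ∑' n : ℕ, f (n + 1) :=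
  tsum_eq_zero_add' ENNReal.summable

/-- First-transition recursion for total expected nonnegative costs. -/
lemma tsum_costAt_rec (f : S → C → ℝ≥0∞) (w : S) :
    (∑' n : ℕ, costAt q (toPolicy μ) w n f)
      = ∑' u : C, μ w u
          * (f w u + ∑' x₁ : S, q w u x₁ * ∑' n : ℕ, costAt q (toPolicy μ) x₁ n f) := by
  rw [ennreal_tsum_nat_peel (fun n => costAt q (toPolicy μ) w n f), costAt_zero]
  have h1 : ∀ n : ℕ, costAt q (toPolicy μ) w (n + 1) f
      = ∑' u : C, μ w u * ∑' x₁ : S, q w u x₁ * costAt q (toPolicy μ) x₁ n f :=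
    fun n => costAt_succ q μ w n f
  rw [tsum_congr h1, ENNReal.tsum_comm]
  rw [← ENNReal.tsum_add]
  refine tsum_congr fun u => ?_
  rw [mul_add]
  congr 1
  rw [ENNReal.tsum_mul_left]
  congr 1
  rw [ENNReal.tsum_comm]
  refine tsum_congr fun x₁ => ?_
  rw [ENNReal.tsum_mul_left]

lemma Jplus_rec (g : S → C → EReal) (w : S) :
    Jplus q g (toPolicy μ) w
      = ∑' u : C, μ w u
          * (gPos g w u + ∑' x₁ : S, q w u x₁ * Jplus q g (toPolicy μ) x₁) :=
  tsum_costAt_rec q μ (gPos g) w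

lemma Jminus_rec (g : S → C → EReal) (w : S) :
    Jminus q g (toPolicy μ) w
      = ∑' u : C, μ w u
          * (gNeg g w u + ∑' x₁ : S, q w u x₁ * Jminus q g (toPolicy μ) x₁) :=
  tsum_costAt_rec q μ (gNeg g) w

lemma Jminus_ne_top {U : S → Set C} {g : S → C → EReal} (hGC : GC U q g)
    {π : Policy S C} (hπ : IsPolicy U π) (x : S) : Jminus q g π x ≠ ⊤ :=
  ne_top_of_le_ne_top (hGC x)
    (le_iSup₂ (f := fun (π' : Policy S C) (_ : π' ∈ {π'' : Policy S C | IsPolicy U π''}) =>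
      Jminus q g π' x) π hπ)

/-- The total cost of a stationary policy is a fixed point of its operator `T_μ`. -/
lemma Jpol_fixed {U : S → Set C} {g : S → C → EReal} (hGC : GC U q g)
    (hμ : IsPolicy U (toPolicy μ)) (x : S) :
    Jpol q g (toPolicy μ) x = Tmu q g μ (Jpol q g (toPolicy μ)) x := by
  set P := toPolicy μ with hP
  have hm : ∀ x' : S, Jminus q g P x' ≠ ⊤ := fun x' => Jminus_ne_top q hGC hμ x'
  have hpos : ∀ x' : S, ePos (Jpol q g P x') = Jplus q g P x' - Jminus q g P x' :=
    fun x' => ePos_signedSum (hm x')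
  have hneg : ∀ x' : S, ePos (-(Jpol q g P x')) = Jminus q g P x' - Jplus q g P x' :=
    fun x' => ePos_neg_signedSum (hm x')
  have hp_split : ∀ x' : S, Jplus q g P x'
      = ePos (Jpol q g P x') + min (Jplus q g P x') (Jminus q g P x') := by
    intro x'; rw [hpos x']; exact tsub_add_min.symm
  have hn_split : ∀ x' : S, Jminus q g P x'
      = ePos (-(Jpol q g P x')) + min (Jplus q g P x') (Jminus q g P x') := by
    intro x'; rw [hneg x', min_comm]; exact tsub_add_min.symm
  set D : ℝ≥0∞ := ∑' u : C, μ x u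
      * ∑' x₁ : S, q x u x₁ * min (Jplus q g P x₁) (Jminus q g P x₁) with hD
  have hDle : D ≤ Jminus q g P x := by
    rw [Jminus_rec]
    refine ENNReal.tsum_le_tsum fun u => mul_le_mul_right ?_ _
    refine le_add_of_nonneg_of_le (by simp) ?_
    exact ENNReal.tsum_le_tsum fun x₁ => mul_le_mul_right (min_le_right _ _) _
  have hDne : D ≠ ⊤ := ne_top_of_le_ne_top (hm x) hDle
  have hplusx : Jplus q g P x
      = (∑' u : C, μ x u * (ePos (g x u)
          + ∑' x₁ : S, q x u x₁ * ePos (Jpol q g P x₁))) + D := by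
    rw [Jplus_rec, hD, ← ENNReal.tsum_add]
    refine tsum_congr fun u => ?_
    rw [← mul_add]
    congr 1
    have : (∑' x₁ : S, q x u x₁ * Jplus q g P x₁)
        = (∑' x₁ : S, q x u x₁ * ePos (Jpol q g P x₁))
          + ∑' x₁ : S, q x u x₁ * min (Jplus q g P x₁) (Jminus q g P x₁) := by
      rw [← ENNReal.tsum_add]
      refine tsum_congr fun x₁ => ?_
      rw [← mul_add, ← hp_split x₁]
    rw [this, gPos]
    ring
  have hminusx : Jminus q g P x
      = (∑' u : C, μ x u * (ePos (-(g x u))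
          + ∑' x₁ : S, q x u x₁ * ePos (-(Jpol q g P x₁)))) + D := by
    rw [Jminus_rec, hD, ← ENNReal.tsum_add]
    refine tsum_congr fun u => ?_
    rw [← mul_add]
    congr 1
    have : (∑' x₁ : S, q x u x₁ * Jminus q g P x₁)
        = (∑' x₁ : S, q x u x₁ * ePos (-(Jpol q g P x₁)))
          + ∑' x₁ : S, q x u x₁ * min (Jplus q g P x₁) (Jminus q g P x₁) := by
      rw [← ENNReal.tsum_add]
      refine tsum_congr fun x₁ => ?_
      rw [← mul_add, ← hn_split x₁]
    rw [this, gNeg]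
    ring
  calc Jpol q g P x = signedSum (Jplus q g P x) (Jminus q g P x) := rfl
    _ = signedSum
          ((∑' u : C, μ x u * (ePos (g x u)
              + ∑' x₁ : S, q x u x₁ * ePos (Jpol q g P x₁))) + D)
          ((∑' u : C, μ x u * (ePos (-(g x u))
              + ∑' x₁ : S, q x u x₁ * ePos (-(Jpol q g P x₁)))) + D) := by
        rw [← hplusx, ← hminusx]
    _ = Tmu q g μ (Jpol q g P) x := signedSum_add_cancel hDne

end RecAux
section MainAux

variable {S C : Type} (q : S → C → S → ℝ≥0∞) (μ : S → C → ℝ≥0∞) (g : S → C → EReal)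

/-- The fundamental induction: if `K` is a (pointwise) super-solution of the
`μ`-Bellman inequality, then the expected `n`-stage positive cost plus the
expected terminal value of `K` is bounded by `K` plus the `n`-stage negative cost. -/
lemma cost_induction (K : S → ℝ≥0∞)
    (hstep : ∀ y : S,
      (∑' u : C, μ y u * (gPos g y u + ∑' x₁ : S, q y u x₁ * K x₁))
        ≤ K y + ∑' u : C, μ y u * gNeg g y u)
    (x : S) : ∀ n : ℕ,
    (∑ k ∈ Finset.range n, costAt q (toPolicy μ) x k (gPos g))
        + (∑' y : S, sDist q (toPolicy μ) x n y * K y)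
      ≤ K x + ∑ k ∈ Finset.range n, costAt q (toPolicy μ) x k (gNeg g) := by
  intro n
  induction n with
  | zero =>
      simp only [Finset.range_zero, Finset.sum_empty, zero_add, add_zero]
      have h : ∀ y : S, sDist q (toPolicy μ) x 0 y * K y
          = (if y = x then (1:ℝ≥0∞) else 0) * K y := fun y => by rw [sDist_zero]
      rw [tsum_congr h, tsum_ite_collapse]
  | succ n ih =>
      have expand : costAt q (toPolicy μ) x n (gPos g)
            + (∑' y : S, sDist q (toPolicy μ) x (n + 1) y * K y)
          = ∑' y : S, sDist q (toPolicy μ) x n y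
              * (∑' u : C, μ y u * (gPos g y u + ∑' x₁ : S, q y u x₁ * K x₁)) := by
        have hsplit : ∀ y : S, sDist q (toPolicy μ) x n y
              * (∑' u : C, μ y u * (gPos g y u + ∑' x₁ : S, q y u x₁ * K x₁))
            = sDist q (toPolicy μ) x n y * (∑' u : C, μ y u * gPos g y u)
              + sDist q (toPolicy μ) x n y
                  * (∑' u : C, μ y u * ∑' x₁ : S, q y u x₁ * K x₁) := by
          intro y
          rw [← mul_add, ← ENNReal.tsum_add]
          congr 1
          exact tsum_congr fun u => by rw [mul_add]
        rw [tsum_congr hsplit, ENNReal.tsum_add]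
        congr 1
        · exact costAt_eq q μ x n (gPos g)
        · -- ∑' y, sDist(n+1) y * K y = ∑' y, sDist n y * ∑' u, μ * ∑ q K
          have lhs2 : ∀ y : S, sDist q (toPolicy μ) x (n + 1) y * K y
              = ∑' z : S, ∑' u : C, sDist q (toPolicy μ) x n z
                  * (μ z u * (q z u y * K y)) := by
            intro y
            rw [sDist_succ, ← ENNReal.tsum_mul_right]
            refine tsum_congr fun z => ?_
            rw [← ENNReal.tsum_mul_right]
            exact tsum_congr fun u => by ring
          rw [tsum_congr lhs2, ENNReal.tsum_comm]
          refine tsum_congr fun z => ?_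
          rw [← ENNReal.tsum_mul_left]
          rw [ENNReal.tsum_comm]
          refine tsum_congr fun u => ?_
          rw [← ENNReal.tsum_mul_left, ← ENNReal.tsum_mul_left]
      have key : costAt q (toPolicy μ) x n (gPos g)
            + (∑' y : S, sDist q (toPolicy μ) x (n + 1) y * K y)
          ≤ (∑' y : S, sDist q (toPolicy μ) x n y * K y)
            + costAt q (toPolicy μ) x n (gNeg g) := by
        rw [expand]
        calc (∑' y : S, sDist q (toPolicy μ) x n y
                * (∑' u : C, μ y u * (gPos g y u + ∑' x₁ : S, q y u x₁ * K x₁)))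
            ≤ ∑' y : S, sDist q (toPolicy μ) x n y
                * (K y + ∑' u : C, μ y u * gNeg g y u) :=
              ENNReal.tsum_le_tsum fun y => mul_le_mul_right (hstep y) _
          _ = (∑' y : S, sDist q (toPolicy μ) x n y * K y)
                + costAt q (toPolicy μ) x n (gNeg g) := by
              rw [costAt_eq, ← ENNReal.tsum_add]
              exact tsum_congr fun y => by rw [mul_add]
      calc (∑ k ∈ Finset.range (n + 1), costAt q (toPolicy μ) x k (gPos g))
            + (∑' y : S, sDist q (toPolicy μ) x (n + 1) y * K y)
          = (∑ k ∈ Finset.range n, costAt q (toPolicy μ) x k (gPos g))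
              + (costAt q (toPolicy μ) x n (gPos g)
                + (∑' y : S, sDist q (toPolicy μ) x (n + 1) y * K y)) := by
            rw [Finset.sum_range_succ, add_assoc]
        _ ≤ (∑ k ∈ Finset.range n, costAt q (toPolicy μ) x k (gPos g))
              + ((∑' y : S, sDist q (toPolicy μ) x n y * K y)
                + costAt q (toPolicy μ) x n (gNeg g)) := add_le_add le_rfl key
        _ = ((∑ k ∈ Finset.range n, costAt q (toPolicy μ) x k (gPos g))
              + (∑' y : S, sDist q (toPolicy μ) x n y * K y))
              + costAt q (toPolicy μ) x n (gNeg g) := by rw [add_assoc]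
        _ ≤ (K x + ∑ k ∈ Finset.range n, costAt q (toPolicy μ) x k (gNeg g))
              + costAt q (toPolicy μ) x n (gNeg g) := add_le_add ih le_rfl
        _ = K x + ∑ k ∈ Finset.range (n + 1), costAt q (toPolicy μ) x k (gNeg g) := by
            rw [Finset.sum_range_succ, add_assoc]

end MainAux
/-- if `J* ≥ 0`, a stationary policy `μ` is optimal iff
`J* = T_μ(J*)`. -/
theorem stationary_optimal_iff_fixed_point {S C : Type} [Countable S] [Countable C]
    (U : S → Set C) (q : S → C → S → ℝ≥0∞) (g : S → C → EReal)
    (hU : ∀ x, (U x).Nonempty)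
    (hg : ∀ x, ∀ u ∈ U x, g x u ≠ ⊥)
    (hq : ∀ x, ∀ u ∈ U x, (∑' x' : S, q x u x') = 1)
    (hGC : GC U q g)
    (hpos : ∀ x : S, 0 ≤ Jstar U q g x)
    (μ : S → C → ℝ≥0∞) (hμ : IsPolicy U (toPolicy μ)) :
    (∀ x : S, Jpol q g (toPolicy μ) x = Jstar U q g x) ↔
      (∀ x : S, Jstar U q g x = Tmu q g μ (Jstar U q g) x) := by
  constructor
  · intro h x
    have hfun : Jpol q g (toPolicy μ) = Jstar U q g := funext h
    rw [← hfun]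
    exact Jpol_fixed q μ hGC hμ x
  · intro hfix x
    have hJge : Jstar U q g x ≤ Jpol q g (toPolicy μ) x :=
      iInf₂_le (toPolicy μ) hμ
    refine le_antisymm ?_ hJge
    -- pointwise Bellman inequality for K = ePos ∘ Jstar
    have hstep : ∀ y : S,
        (∑' u : C, μ y u * (gPos g y u
            + ∑' x₁ : S, q y u x₁ * ePos (Jstar U q g x₁)))
          ≤ ePos (Jstar U q g y) + ∑' u : C, μ y u * gNeg g y u := by
      intro y
      have hTmu : Tmu q g μ (Jstar U q g) y
          = signedSum
              (∑' u : C, μ y u * (gPos g y u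
                + ∑' x₁ : S, q y u x₁ * ePos (Jstar U q g x₁)))
              (∑' u : C, μ y u * gNeg g y u) := by
        rw [Tmu]
        congr 1
        refine tsum_congr fun u => ?_
        congr 1
        have hz : ∀ x' : S, q y u x' * ePos (-(Jstar U q g x')) = 0 := fun x' => by
          rw [ePos_neg_of_nonneg (hpos x'), mul_zero]
        rw [tsum_congr hz, tsum_zero, add_zero, gNeg]
      have h0 : 0 ≤ signedSum
          (∑' u : C, μ y u * (gPos g y u
            + ∑' x₁ : S, q y u x₁ * ePos (Jstar U q g x₁)))
          (∑' u : C, μ y u * gNeg g y u) := by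
        rw [← hTmu, ← hfix y]; exact hpos y
      have h1 := le_of_signedSum_nonneg h0
      rwa [← hTmu, ← hfix y] at h1
    have hind := cost_induction q μ g (fun y => ePos (Jstar U q g y)) hstep x
    have hplus_le : Jplus q g (toPolicy μ) x
        ≤ ePos (Jstar U q g x) + Jminus q g (toPolicy μ) x := by
      rw [Jplus, ENNReal.tsum_eq_iSup_nat]
      refine iSup_le fun n => ?_
      calc (∑ k ∈ Finset.range n, costAt q (toPolicy μ) x k (gPos g))
          ≤ (∑ k ∈ Finset.range n, costAt q (toPolicy μ) x k (gPos g))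
            + (∑' y : S, sDist q (toPolicy μ) x n y * ePos (Jstar U q g y)) :=
            le_add_right le_rfl
        _ ≤ ePos (Jstar U q g x)
            + ∑ k ∈ Finset.range n, costAt q (toPolicy μ) x k (gNeg g) := hind n
        _ ≤ ePos (Jstar U q g x) + Jminus q g (toPolicy μ) x :=
            add_le_add le_rfl (ENNReal.sum_le_tsum _)
    calc Jpol q g (toPolicy μ) x
        = signedSum (Jplus q g (toPolicy μ) x) (Jminus q g (toPolicy μ) x) := rfl
      _ ≤ (ePos (Jstar U q g x) : EReal) :=
          signedSum_le_coe (Jminus_ne_top q hGC hμ x) hplus_le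
      _ = Jstar U q g x := coe_ePos_of_nonneg (hpos x)

end GCMDP

end
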